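/- Let A be a continuous matrix-valued function on an interval I containing t₀, and let Φ_A(t; t₀) denote the sum of the Peano–Baker series. Then Φ_A satisfies the Volterra integral equation Φ_A(t; t₀) = 1 + ∫_{t₀}^t A(τ) · Φ_A(τ; t₀) dτ for all t ∈ I; in particular Φ_A(t₀; t₀) = 1. -/

import Mathlib

attribute [local instance] Matrix.normedAddCommGroup Matrix.normedSpace

/-- The iterated Peano–Baker integrals: `pbIter A t₀ 0 = 1` (identity matrix) and
`pbIter A t₀ (n+1) t = ∫_{t₀}^t A τ * pbIter A t₀ n τ dτ`. -/
noncomputable def pbIter {d : ℕ} (A : ℝ → Matrix (Fin d) (Fin d) ℝ) (t₀ : ℝ) :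
    ℕ → ℝ → Matrix (Fin d) (Fin d) ℝ
  | 0 => fun _ => 1
  | n + 1 => fun t => ∫ τ in t₀..t, A τ * pbIter A t₀ n τ

noncomputable instance matENorm {d : ℕ} : ENormedAddMonoid (Matrix (Fin d) (Fin d) ℝ) :=
  inferInstanceAs (ENormedAddMonoid (Fin d → Fin d → ℝ))

instance matPMS {d : ℕ} : TopologicalSpace.PseudoMetrizableSpace (Matrix (Fin d) (Fin d) ℝ) :=
  inferInstanceAs (TopologicalSpace.PseudoMetrizableSpace (Fin d → Fin d → ℝ))

open MeasureTheory intervalIntegral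

section Aux
variable {d : ℕ}


lemma mat_norm_mul (A B : Matrix (Fin d) (Fin d) ℝ) : ‖A * B‖ ≤ d * ‖A‖ * ‖B‖ := by
  rw [Matrix.norm_le_iff (by positivity)]
  intro i j
  calc ‖(A * B) i j‖ = ‖∑ k, A i k * B k j‖ := by rw [Matrix.mul_apply]
    _ ≤ ∑ k, ‖A i k * B k j‖ := norm_sum_le _ _
    _ ≤ ∑ _k : Fin d, ‖A‖ * ‖B‖ := by
        refine Finset.sum_le_sum fun k _ => ?_
        rw [norm_mul]
        exact mul_le_mul (Matrix.norm_entry_le_entrywise_sup_norm A)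
          (Matrix.norm_entry_le_entrywise_sup_norm B) (norm_nonneg _) (norm_nonneg _)
    _ = d * ‖A‖ * ‖B‖ := by simp [mul_assoc]

lemma mat_norm_one : ‖(1 : Matrix (Fin d) (Fin d) ℝ)‖ ≤ 1 := by
  rw [Matrix.norm_le_iff zero_le_one]
  intro i j
  by_cases h : i = j <;> simp [Matrix.one_apply, h]

lemma contOn_mul {f g : ℝ → Matrix (Fin d) (Fin d) ℝ} {s : Set ℝ}
    (hf : ContinuousOn f s) (hg : ContinuousOn g s) :
    ContinuousOn (fun x => f x * g x) s :=
  (Continuous.matrix_mul (continuous_fst) (continuous_snd)).comp_continuousOn (hf.prodMk hg) (f := fun x : ℝ => (f x, g x))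

lemma integral_abs_pow (t₀ c : ℝ) (n : ℕ) :
    ∫ x in t₀..(t₀ + c), |x - t₀| ^ n = c * |c| ^ n / (n + 1) := by
  rw [intervalIntegral.integral_comp_sub_right (fun x => |x| ^ n) t₀]
  simp only [sub_self, add_sub_cancel_left]
  rcases le_or_gt 0 c with hc | hc
  · rw [intervalIntegral.integral_congr (g := fun x => x ^ n)
      (fun x hx => by rw [Set.uIcc_of_le hc] at hx; rw [abs_of_nonneg hx.1]),
      integral_pow]
    rw [abs_of_nonneg hc]
    ring
  · rw [intervalIntegral.integral_congr (g := fun x => (-x) ^ n)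
      (fun x hx => by rw [Set.uIcc_of_ge hc.le] at hx; rw [abs_of_nonpos hx.2]),
      intervalIntegral.integral_comp_neg (fun x => x ^ n), integral_pow]
    rw [abs_of_neg hc]
    ring


lemma pb_key (A : ℝ → Matrix (Fin d) (Fin d) ℝ) (t₀ t : ℝ)
    (hA : ContinuousOn A (Set.uIcc t₀ t)) (M : ℝ) (hM0 : 0 ≤ M)
    (hM : ∀ τ ∈ Set.uIcc t₀ t, ‖A τ‖ ≤ M) (n : ℕ) :
    ContinuousOn (pbIter A t₀ n) (Set.uIcc t₀ t) ∧
    ∀ τ ∈ Set.uIcc t₀ t,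
      ‖pbIter A t₀ n τ‖ ≤ (d * M) ^ n * |τ - t₀| ^ n / n.factorial := by
  induction n with
  | zero =>
    refine ⟨continuousOn_const, fun τ hτ => ?_⟩
    simpa [pbIter] using mat_norm_one
  | succ n ih =>
    obtain ⟨ihc, ihb⟩ := ih
    have hfc : ContinuousOn (fun τ => A τ * pbIter A t₀ n τ) (Set.uIcc t₀ t) :=
      contOn_mul hA ihc
    have hint : IntervalIntegrable (fun τ => A τ * pbIter A t₀ n τ) volume t₀ t :=
      hfc.intervalIntegrable
    constructor
    · exact (continuousOn_primitive_interval' hint Set.left_mem_uIcc :)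
    · intro τ hτ
      have hsub : Set.uIcc t₀ τ ⊆ Set.uIcc t₀ t :=
        Set.uIcc_subset_uIcc Set.left_mem_uIcc hτ
      have hbd : ∀ᵐ σ ∂(volume.restrict (Set.uIoc t₀ τ)),
          ‖A σ * pbIter A t₀ n σ‖ ≤ (d * M) * ((d * M) ^ n * |σ - t₀| ^ n / n.factorial) := by
        refine (ae_restrict_iff' measurableSet_uIoc).2 (ae_of_all _ fun σ hσ => ?_)
        have hσ' : σ ∈ Set.uIcc t₀ t := hsub (Set.uIoc_subset_uIcc hσ)
        calc ‖A σ * pbIter A t₀ n σ‖ ≤ d * ‖A σ‖ * ‖pbIter A t₀ n σ‖ := mat_norm_mul _ _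
          _ ≤ d * M * ((d * M) ^ n * |σ - t₀| ^ n / n.factorial) := by
              have h1 := hM σ hσ'
              have h2 := ihb σ hσ'
              have h3 : (0:ℝ) ≤ (d * M) ^ n * |σ - t₀| ^ n / n.factorial := by positivity
              have h4 : (0:ℝ) ≤ ‖pbIter A t₀ n σ‖ := norm_nonneg _
              calc (d:ℝ) * ‖A σ‖ * ‖pbIter A t₀ n σ‖
                  ≤ (d:ℝ) * M * ‖pbIter A t₀ n σ‖ := by
                    apply mul_le_mul_of_nonneg_right _ h4
                    exact mul_le_mul_of_nonneg_left h1 (by positivity)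
                _ ≤ (d:ℝ) * M * ((d * M) ^ n * |σ - t₀| ^ n / n.factorial) :=
                    mul_le_mul_of_nonneg_left h2 (by positivity)
      have hgint : IntervalIntegrable
          (fun σ => (d * M) * ((d * M) ^ n * |σ - t₀| ^ n / n.factorial)) volume t₀ τ := by
        apply Continuous.intervalIntegrable
        fun_prop
      have key := intervalIntegral.norm_integral_le_abs_of_norm_le hbd hgint
      have e : ∀ σ : ℝ, (d:ℝ) * M * ((d * M) ^ n * |σ - t₀| ^ n / n.factorial)
          = ((d:ℝ) * M) ^ (n+1) / n.factorial * |σ - t₀| ^ n := fun σ => by ring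
      have hval : (∫ σ in t₀..τ, (d:ℝ) * M * ((d * M) ^ n * |σ - t₀| ^ n / n.factorial))
          = ((d:ℝ)*M)^(n+1) / n.factorial * ((τ - t₀) * |τ - t₀| ^ n / (n + 1)) := by
        simp only [e]
        rw [intervalIntegral.integral_const_mul]
        have h8 := integral_abs_pow t₀ (τ - t₀) n
        rw [add_sub_cancel] at h8
        rw [h8]
      rw [hval] at key
      show ‖∫ σ in t₀..τ, A σ * pbIter A t₀ n σ‖ ≤ _
      refine key.trans ?_
      have habs : |((d:ℝ)*M)^(n+1) / n.factorial * ((τ - t₀) * |τ - t₀| ^ n / (n + 1))|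
          = ((d:ℝ)*M)^(n+1) / n.factorial * (|τ - t₀| * |τ - t₀| ^ n / (n + 1)) := by
        rw [abs_mul, abs_of_nonneg (by positivity : (0:ℝ) ≤ ((d:ℝ)*M)^(n+1) / n.factorial),
          abs_div, abs_mul, abs_pow, abs_abs,
          abs_of_nonneg (by positivity : (0:ℝ) ≤ (n:ℝ)+1)]
      rw [habs, show |τ - t₀| * |τ - t₀| ^ n = |τ - t₀| ^ (n+1) from (pow_succ' _ _).symm,
        Nat.factorial_succ]
      push_cast
      have hf : (n.factorial:ℝ) ≠ 0 := by positivity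
      have hn : ((n:ℝ)+1) ≠ 0 := by positivity
      apply le_of_eq
      field_simp

lemma abs_sub_le_of_uIcc {t₀ t τ : ℝ} (hτ : τ ∈ Set.uIcc t₀ t) : |τ - t₀| ≤ |t - t₀| := by
  rcases Set.mem_uIcc.mp hτ with ⟨h1, h2⟩ | ⟨h1, h2⟩
  · rw [abs_of_nonneg (by linarith), abs_of_nonneg (by linarith)]; linarith
  · rw [abs_of_nonpos (by linarith), abs_of_nonpos (by linarith)]; linarith

lemma hasSum_intervalIntegral {f : ℕ → ℝ → Matrix (Fin d) (Fin d) ℝ} {a b : ℝ}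
    (hf : ∀ n, IntervalIntegrable (f n) volume a b)
    (h : Summable fun n => ∫ τ in Set.uIoc a b, ‖f n τ‖) :
    HasSum (fun n => ∫ τ in a..b, f n τ) (∫ τ in a..b, ∑' n, f n τ) := by
  have hint : ∀ n, Integrable (f n) (volume.restrict (Set.uIoc a b)) := fun n =>
    intervalIntegrable_iff.mp (hf n)
  have H := MeasureTheory.hasSum_integral_of_summable_integral_norm
    (μ := volume.restrict (Set.uIoc a b)) hint h
  simp only [intervalIntegral_eq_integral_uIoc]
  exact H.const_smul _

end Aux

theorem stmt8 {d : ℕ} (hd : 1 ≤ d) (A : ℝ → Matrix (Fin d) (Fin d) ℝ)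
    (I : Set ℝ) (hI : I.OrdConnected) (t₀ : ℝ) (ht₀ : t₀ ∈ I)
    (hA : ContinuousOn A I) :
    (∀ t ∈ I, ∑' n : ℕ, pbIter A t₀ n t
        = 1 + ∫ τ in t₀..t, A τ * ∑' n : ℕ, pbIter A t₀ n τ) ∧
    ∑' n : ℕ, pbIter A t₀ n t₀ = 1 := by
  have main : ∀ t ∈ I, ∑' n : ℕ, pbIter A t₀ n t
      = 1 + ∫ τ in t₀..t, A τ * ∑' n : ℕ, pbIter A t₀ n τ := by
    intro t ht
    set J := Set.uIcc t₀ t with hJdef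
    have hJI : J ⊆ I := hI.uIcc_subset ht₀ ht
    have hAJ : ContinuousOn A J := hA.mono hJI
    obtain ⟨M₀, hM₀⟩ := isCompact_uIcc.exists_bound_of_continuousOn hAJ
    set M := max M₀ 0 with hMdef
    have hM0 : 0 ≤ M := le_max_right _ _
    have hM : ∀ τ ∈ J, ‖A τ‖ ≤ M := fun τ hτ => (hM₀ τ hτ).trans (le_max_left _ _)
    have hkey := fun n => pb_key A t₀ t hAJ M hM0 hM n
    set K := |t - t₀| with hKdef
    have hK0 : 0 ≤ K := abs_nonneg _
    -- uniform bound
    have hub : ∀ n, ∀ τ ∈ J, ‖pbIter A t₀ n τ‖ ≤ (d * M * K) ^ n / n.factorial := by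
      intro n τ hτ
      refine ((hkey n).2 τ hτ).trans ?_
      rw [show ((d:ℝ)*M*K)^n = ((d:ℝ)*M)^n * K^n from mul_pow _ _ _]
      gcongr
      exact abs_sub_le_of_uIcc hτ
    -- summability of the series at each point of J
    have hsummable : ∀ τ ∈ J, Summable (fun n => pbIter A t₀ n τ) := by
      intro τ hτ
      exact Summable.of_norm_bounded (Real.summable_pow_div_factorial (d*M*K))
        (fun n => hub n τ hτ)
    -- integrability of each term
    have hfint : ∀ n, IntervalIntegrable (fun τ => A τ * pbIter A t₀ n τ) volume t₀ t :=
      fun n => (contOn_mul hAJ (hkey n).1).intervalIntegrable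
    -- summability of the norm integrals
    have hVlt : volume (Set.uIoc t₀ t) < ⊤ := by
      rw [Set.uIoc]; exact measure_Ioc_lt_top
    set V := (volume (Set.uIoc t₀ t)).toReal with hVdef
    have hnorms : Summable fun n => ∫ τ in Set.uIoc t₀ t, ‖A τ * pbIter A t₀ n τ‖ := by
      have hb : ∀ n, (∫ τ in Set.uIoc t₀ t, ‖A τ * pbIter A t₀ n τ‖)
          ≤ (d * M * ((d*M*K)^n / n.factorial)) * V := by
        intro n
        calc (∫ τ in Set.uIoc t₀ t, ‖A τ * pbIter A t₀ n τ‖)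
            ≤ ‖∫ τ in Set.uIoc t₀ t, ‖A τ * pbIter A t₀ n τ‖‖ := le_abs_self _
          _ ≤ (d * M * ((d*M*K)^n / n.factorial)) * V := by
              refine norm_setIntegral_le_of_norm_le_const hVlt (fun τ hτ => ?_)
              · have hτ' : τ ∈ J := Set.uIoc_subset_uIcc hτ
                rw [norm_norm]
                calc ‖A τ * pbIter A t₀ n τ‖ ≤ (d:ℝ) * ‖A τ‖ * ‖pbIter A t₀ n τ‖ :=
                      mat_norm_mul _ _
                  _ ≤ (d:ℝ) * M * ((d*M*K)^n / n.factorial) := by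
                      have h1 := hM τ hτ'
                      have h2 := hub n τ hτ'
                      have h3 : (0:ℝ) ≤ ‖pbIter A t₀ n τ‖ := norm_nonneg _
                      have h4 : (0:ℝ) ≤ (d*M*K)^n / n.factorial := by positivity
                      calc (d:ℝ) * ‖A τ‖ * ‖pbIter A t₀ n τ‖
                          ≤ (d:ℝ) * M * ‖pbIter A t₀ n τ‖ := by
                            apply mul_le_mul_of_nonneg_right _ h3
                            exact mul_le_mul_of_nonneg_left h1 (by positivity)
                        _ ≤ (d:ℝ) * M * ((d*M*K)^n / n.factorial) :=
                            mul_le_mul_of_nonneg_left h2 (by positivity)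
      refine Summable.of_nonneg_of_le (fun n => ?_) hb ?_
      · exact MeasureTheory.integral_nonneg (fun τ => norm_nonneg _)
      · have := (Real.summable_pow_div_factorial (d*M*K)).mul_left ((d:ℝ) * M)
        exact this.mul_right V
    -- the interchange
    have hHS := hasSum_intervalIntegral hfint hnorms
    have hteq : ∑' n, (∫ τ in t₀..t, A τ * pbIter A t₀ n τ)
        = ∫ τ in t₀..t, ∑' n, A τ * pbIter A t₀ n τ := hHS.tsum_eq
    -- rewrite integrand
    have hcongr : (∫ τ in t₀..t, ∑' n, A τ * pbIter A t₀ n τ)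
        = ∫ τ in t₀..t, A τ * ∑' n, pbIter A t₀ n τ := by
      refine intervalIntegral.integral_congr (fun τ hτ => ?_)
      have hs := hsummable τ hτ
      exact ((LinearMap.mulLeft ℝ (A τ)).toContinuousLinearMap.map_tsum hs).symm
    have ht_mem : t ∈ J := Set.right_mem_uIcc
    calc ∑' n, pbIter A t₀ n t
        = pbIter A t₀ 0 t + ∑' n, pbIter A t₀ (n+1) t :=
          Summable.tsum_eq_zero_add (hsummable t ht_mem)
      _ = 1 + ∑' n, (∫ τ in t₀..t, A τ * pbIter A t₀ n τ) := by rfl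
      _ = 1 + ∫ τ in t₀..t, A τ * ∑' n, pbIter A t₀ n τ := by rw [hteq, hcongr]
  refine ⟨main, ?_⟩
  have := main t₀ ht₀
  rwa [intervalIntegral.integral_same, add_zero] at this
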